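/- Let $u, p \in (0,1)$ with $u \ne p$. Then the self-similar measure $\mu_u$ for the IFS $S_0(x) = u+(1-u)x$, $S_1(x)=ux$ with weights $(1-p,p)$ is singular with respect to Lebesgue measure on $[0,1]$. -/

import Mathlib

set_option linter.unusedSectionVars false
set_option linter.deprecated false

open MeasureTheory Set ProbabilityTheory Filter Topology
open scoped Classical

namespace Stmt12Aux

noncomputable def TT (u : ℝ) (x : ℝ) : ℝ := if x < u then x / u else (x - u) / (1 - u)

def Ek (u : ℝ) (k : ℕ) : Set ℝ := (TT u)^[k] ⁻¹' (Set.Ico 0 u)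

noncomputable def dig (u : ℝ) (k : ℕ) (x : ℝ) : ℝ := (Ek u k).indicator (fun _ => 1) x

lemma measurable_TT (u : ℝ) : Measurable (TT u) := by
  unfold TT
  exact Measurable.ite measurableSet_Iio (measurable_id.div_const u)
    ((measurable_id.sub_const u).div_const (1-u))

lemma measurableSet_Ek (u : ℝ) (k : ℕ) : MeasurableSet (Ek u k) :=
  ((measurable_TT u).iterate k) measurableSet_Ico

lemma measurable_dig (u : ℝ) (k : ℕ) : Measurable (dig u k) :=
  measurable_const.indicator (measurableSet_Ek u k)

section Mu

variable {u p : ℝ} (hu : u ∈ Set.Ioo (0:ℝ) 1) (hp : p ∈ Set.Ioo (0:ℝ) 1)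
  (μ : Measure ℝ) [IsProbabilityMeasure μ] (hsupp : μ (Set.Icc (0:ℝ) 1)ᶜ = 0)
  (hss : μ = ENNReal.ofReal (1 - p) • μ.map (fun x => u + (1 - u) * x)
          + ENNReal.ofReal p • μ.map (fun x => u * x))

include hsupp in
lemma nullIio : μ (Set.Iio (0:ℝ)) = 0 := by
  refine measure_mono_null (fun x hx => ?_) hsupp
  simp only [mem_compl_iff, mem_Icc, mem_Iio] at hx ⊢
  push_neg
  intro h
  exact absurd h (not_le.2 hx)

include hsupp in
lemma nullIoi : μ (Set.Ioi (1:ℝ)) = 0 := by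
  refine measure_mono_null (fun x hx => ?_) hsupp
  simp only [mem_compl_iff, mem_Icc, mem_Ioi] at hx ⊢
  push_neg
  exact fun _ => hx

include hu hp hsupp hss in
lemma null1 : μ {(1:ℝ)} = 0 := by
  obtain ⟨hu0, hu1⟩ := hu
  obtain ⟨hp0, hp1⟩ := hp
  have m0 : Measurable (fun x : ℝ => u + (1 - u) * x) :=
    (measurable_id.const_mul (1-u)).const_add u
  have m1 : Measurable (fun x : ℝ => u * x) := measurable_id.const_mul u
  have h0 : (fun x : ℝ => u + (1 - u) * x) ⁻¹' {1} = {1} := by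
    ext x
    simp only [mem_preimage, mem_singleton_iff]
    constructor
    · intro h; have : (1-u) * x = (1-u) * 1 := by linarith
      exact mul_left_cancel₀ (by linarith) this
    · intro h; rw [h]; ring
  have h1 : (fun x : ℝ => u * x) ⁻¹' {1} ⊆ Set.Ioi 1 := by
    intro x hx
    simp only [mem_preimage, mem_singleton_iff] at hx
    have : x = 1 / u := by field_simp at hx ⊢; linarith
    rw [this, mem_Ioi]
    rw [lt_div_iff₀ hu0]
    linarith
  have key : μ {(1:ℝ)} = ENNReal.ofReal (1 - p) * μ {(1:ℝ)} := by
    conv_lhs => rw [hss]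
    rw [Measure.add_apply, Measure.smul_apply, Measure.smul_apply, smul_eq_mul, smul_eq_mul,
      Measure.map_apply m0 (measurableSet_singleton 1),
      Measure.map_apply m1 (measurableSet_singleton 1), h0,
      measure_mono_null h1 (nullIoi μ hsupp), mul_zero, add_zero]
  by_contra h
  have hlt : ENNReal.ofReal (1 - p) * μ {(1:ℝ)} < 1 * μ {(1:ℝ)} := by
    refine ENNReal.mul_lt_mul_left h (measure_ne_top μ _) ?_
    rw [← ENNReal.ofReal_one]
    exact ENNReal.ofReal_lt_ofReal_iff_of_nonneg (by linarith) |>.2 (by linarith)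
  rw [one_mul, ← key] at hlt
  exact lt_irrefl _ hlt

include hu hp hsupp hss in
lemma fullIco : μ (Set.Ico (0:ℝ) 1)ᶜ = 0 := by
  have : (Set.Ico (0:ℝ) 1)ᶜ ⊆ Set.Iio 0 ∪ {1} ∪ Set.Ioi 1 := by
    intro x hx
    simp only [mem_compl_iff, mem_Ico, not_and, not_lt] at hx
    rcases lt_or_ge x 0 with h | h
    · exact Or.inl (Or.inl h)
    · rcases eq_or_lt_of_le (hx h) with h1 | h1
      · exact Or.inl (Or.inr h1.symm)
      · exact Or.inr h1
  refine measure_mono_null this ?_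
  refine le_antisymm ?_ (zero_le)
  calc μ (Set.Iio 0 ∪ {1} ∪ Set.Ioi 1) ≤ μ (Set.Iio 0 ∪ {1}) + μ (Set.Ioi 1) := measure_union_le _ _
    _ ≤ (μ (Set.Iio 0) + μ {1}) + μ (Set.Ioi 1) := by gcongr; exact measure_union_le _ _
    _ = 0 := by rw [nullIio μ hsupp, nullIoi μ hsupp, null1 hu hp μ hsupp hss]; simp


include hu hp hsupp hss in
lemma lemA {A : Set ℝ} (hA : MeasurableSet A) (hsub : A ⊆ Set.Ico 0 1) :
    μ {y | y / u ∈ A} = ENNReal.ofReal p * μ A := by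
  obtain ⟨hu0, hu1⟩ := hu
  have m0 : Measurable (fun x : ℝ => u + (1 - u) * x) :=
    (measurable_id.const_mul (1-u)).const_add u
  have m1 : Measurable (fun x : ℝ => u * x) := measurable_id.const_mul u
  have hB : MeasurableSet {y : ℝ | y / u ∈ A} := (measurable_id.div_const u) hA
  conv_lhs => rw [hss]
  rw [Measure.add_apply, Measure.smul_apply, Measure.smul_apply, smul_eq_mul, smul_eq_mul,
    Measure.map_apply m0 hB, Measure.map_apply m1 hB]
  have h1 : (fun x : ℝ => u * x) ⁻¹' {y : ℝ | y / u ∈ A} = A := by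
    ext x
    simp only [mem_preimage, mem_setOf_eq, mul_div_cancel_left₀ _ (ne_of_gt hu0)]
  have h0 : (fun x : ℝ => u + (1 - u) * x) ⁻¹' {y : ℝ | y / u ∈ A} ⊆ Set.Iio 0 := by
    intro x hx
    simp only [mem_preimage, mem_setOf_eq] at hx
    have := (hsub hx).2
    rw [div_lt_one hu0] at this
    rw [mem_Iio]
    nlinarith
  rw [h1, measure_mono_null h0 (nullIio μ hsupp), mul_zero, zero_add]

include hu hp hsupp hss in
lemma lemB {A : Set ℝ} (hA : MeasurableSet A) (hsub : A ⊆ Set.Ico 0 1) :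
    μ {y | (y - u) / (1 - u) ∈ A} = ENNReal.ofReal (1 - p) * μ A := by
  obtain ⟨hu0, hu1⟩ := hu
  have m0 : Measurable (fun x : ℝ => u + (1 - u) * x) :=
    (measurable_id.const_mul (1-u)).const_add u
  have m1 : Measurable (fun x : ℝ => u * x) := measurable_id.const_mul u
  have hB : MeasurableSet {y : ℝ | (y - u) / (1 - u) ∈ A} :=
    ((measurable_id.sub_const u).div_const (1-u)) hA
  conv_lhs => rw [hss]
  rw [Measure.add_apply, Measure.smul_apply, Measure.smul_apply, smul_eq_mul, smul_eq_mul,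
    Measure.map_apply m0 hB, Measure.map_apply m1 hB]
  have h0 : (fun x : ℝ => u + (1 - u) * x) ⁻¹' {y : ℝ | (y - u) / (1 - u) ∈ A} = A := by
    ext x
    simp only [mem_preimage, mem_setOf_eq, add_sub_cancel_left,
      mul_div_cancel_left₀ _ (by linarith : (1:ℝ) - u ≠ 0)]
  have h1 : (fun x : ℝ => u * x) ⁻¹' {y : ℝ | (y - u) / (1 - u) ∈ A} ⊆ {1} ∪ Set.Ioi 1 := by
    intro x hx
    simp only [mem_preimage, mem_setOf_eq] at hx
    have h2 := (hsub hx).1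
    have h3 : 0 ≤ u * x - u := by
      have := div_nonneg_iff.1 h2
      rcases this with ⟨h, _⟩ | ⟨_, h⟩
      · exact h
      · nlinarith
    have : 1 ≤ x := by nlinarith
    rcases eq_or_lt_of_le this with h | h
    · exact Or.inl h.symm
    · exact Or.inr h
  have hn : μ ({(1:ℝ)} ∪ Set.Ioi 1) = 0 := by
    refine le_antisymm ?_ (zero_le)
    calc μ ({(1:ℝ)} ∪ Set.Ioi 1) ≤ μ {(1:ℝ)} + μ (Set.Ioi 1) := measure_union_le _ _
      _ = 0 := by rw [null1 ⟨hu0, hu1⟩ hp μ hsupp hss, nullIoi μ hsupp, add_zero]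
  rw [h0, measure_mono_null h1 hn, mul_zero, add_zero]

include hu hp hsupp hss in
lemma lemC {A : Set ℝ} (hA : MeasurableSet A) :
    μ (TT u ⁻¹' A ∩ Set.Ico 0 u) = ENNReal.ofReal p * μ A := by
  obtain ⟨hu0, hu1⟩ := hu
  have hset : TT u ⁻¹' A ∩ Set.Ico 0 u = {y | y / u ∈ A ∩ Set.Ico 0 1} := by
    ext y
    simp only [mem_inter_iff, mem_preimage, mem_Ico, mem_setOf_eq, TT]
    constructor
    · rintro ⟨hy, h0, h1⟩
      rw [if_pos h1] at hy
      exact ⟨hy, div_nonneg h0 hu0.le, (div_lt_one hu0).2 h1⟩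
    · rintro ⟨hy, h0, h1⟩
      have hy0 : 0 ≤ y := by
        rcases div_nonneg_iff.1 h0 with ⟨h, _⟩ | ⟨_, h⟩
        · exact h
        · nlinarith
      have hyu : y < u := (div_lt_one hu0).1 h1
      rw [if_pos hyu]
      exact ⟨hy, hy0, hyu⟩
  rw [hset, lemA ⟨hu0, hu1⟩ hp μ hsupp hss (hA.inter measurableSet_Ico) inter_subset_right,
    measure_inter_conull (fullIco ⟨hu0, hu1⟩ hp μ hsupp hss)]

include hu hp hsupp hss in
lemma lemD {A : Set ℝ} (hA : MeasurableSet A) :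
    μ (TT u ⁻¹' A ∩ Set.Ico u 1) = ENNReal.ofReal (1 - p) * μ A := by
  obtain ⟨hu0, hu1⟩ := hu
  have hset : TT u ⁻¹' A ∩ Set.Ico u 1 = {y | (y - u) / (1 - u) ∈ A ∩ Set.Ico 0 1} := by
    ext y
    simp only [mem_inter_iff, mem_preimage, mem_Ico, mem_setOf_eq, TT]
    constructor
    · rintro ⟨hy, h0, h1⟩
      rw [if_neg (not_lt.2 h0)] at hy
      refine ⟨hy, div_nonneg (by linarith) (by linarith), ?_⟩
      rw [div_lt_one (by linarith)]
      linarith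
    · rintro ⟨hy, h0, h1⟩
      have h1u : (0:ℝ) < 1 - u := by linarith
      have hy0 : u ≤ y := by
        rcases div_nonneg_iff.1 h0 with ⟨h, _⟩ | ⟨_, h⟩
        · linarith
        · nlinarith
      have hy1 : y < 1 := by
        rw [div_lt_one h1u] at h1
        linarith
      rw [if_neg (not_lt.2 hy0)]
      exact ⟨hy, hy0, hy1⟩
  rw [hset, lemB ⟨hu0, hu1⟩ hp μ hsupp hss (hA.inter measurableSet_Ico) inter_subset_right,
    measure_inter_conull (fullIco ⟨hu0, hu1⟩ hp μ hsupp hss)]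

include hu hp hsupp hss in
lemma lemE {A : Set ℝ} (hA : MeasurableSet A) : μ (TT u ⁻¹' A) = μ A := by
  obtain ⟨hu0, hu1⟩ := hu
  have hsplit : μ (TT u ⁻¹' A) = μ (TT u ⁻¹' A ∩ Set.Ico 0 1) :=
    (measure_inter_conull (fullIco ⟨hu0, hu1⟩ hp μ hsupp hss)).symm
  have hIco : Set.Ico (0:ℝ) u ∪ Set.Ico u 1 = Set.Ico (0:ℝ) 1 :=
    Set.Ico_union_Ico_eq_Ico hu0.le hu1.le
  rw [hsplit, ← hIco, Set.inter_union_distrib_left,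
    measure_union ?_ ((measurable_TT u hA).inter measurableSet_Ico),
    lemC ⟨hu0, hu1⟩ hp μ hsupp hss hA, lemD ⟨hu0, hu1⟩ hp μ hsupp hss hA,
    ← add_mul, ← ENNReal.ofReal_add hp.1.le (by linarith [hp.2]), add_sub_cancel,
    ENNReal.ofReal_one, one_mul]
  exact (Set.Ico_disjoint_Ico_same).mono inter_subset_right inter_subset_right

include hu hp hsupp hss in
lemma lemE' (k : ℕ) {A : Set ℝ} (hA : MeasurableSet A) : μ ((TT u)^[k] ⁻¹' A) = μ A := by
  induction k with
  | zero => simp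
  | succ n ih =>
    rw [Function.iterate_succ, Set.preimage_comp]
    rw [lemE hu hp μ hsupp hss (((measurable_TT u).iterate n) hA), ih]

include hu hp hsupp hss in
lemma muEk (k : ℕ) : μ (Ek u k) = ENNReal.ofReal p := by
  have h0 : μ (Set.Ico 0 u) = ENNReal.ofReal p := by
    have := lemC hu hp μ hsupp hss (A := Set.univ) MeasurableSet.univ
    simpa using this
  rw [Ek, lemE' hu hp μ hsupp hss k measurableSet_Ico, h0]

include hu hp hsupp hss in
lemma muEkEk {i j : ℕ} (hij : i < j) :
    μ (Ek u i ∩ Ek u j) = ENNReal.ofReal p * ENNReal.ofReal p := by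
  obtain ⟨m, rfl⟩ : ∃ m, j = (m + 1) + i := ⟨j - i - 1, by omega⟩
  have hj : (TT u)^[(m+1)+i] = (TT u)^[m+1] ∘ (TT u)^[i] := Function.iterate_add _ _ _
  have hEj : Ek u ((m+1)+i) = (TT u)^[i] ⁻¹' (Ek u (m + 1)) := by
    rw [Ek, Ek, hj, Set.preimage_comp]
  have hEi : Ek u i = (TT u)^[i] ⁻¹' (Set.Ico 0 u) := rfl
  have hEm : Ek u (m+1) = TT u ⁻¹' (Ek u m) := by
    rw [Ek, Ek, Function.iterate_succ, Set.preimage_comp]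
  rw [hEi, hEj, ← Set.preimage_inter,
    lemE' hu hp μ hsupp hss i (measurableSet_Ico.inter (measurableSet_Ek u (m+1))),
    hEm, Set.inter_comm,
    lemC hu hp μ hsupp hss (measurableSet_Ek u m), muEk hu hp μ hsupp hss m]


lemma preim_dig (u : ℝ) (k : ℕ) (s : Set ℝ) :
    dig u k ⁻¹' s =
      if (1:ℝ) ∈ s then (if (0:ℝ) ∈ s then Set.univ else Ek u k)
      else (if (0:ℝ) ∈ s then (Ek u k)ᶜ else ∅) := by
  ext x
  by_cases hx : x ∈ Ek u k <;> by_cases h1 : (1:ℝ) ∈ s <;> by_cases h0 : (0:ℝ) ∈ s <;>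
    simp [dig, Set.indicator_apply, hx, h1, h0]

lemma prod_compl {μ : Measure ℝ} [IsProbabilityMeasure μ] {A B : Set ℝ}
    (hB : MeasurableSet B) (h : μ (A ∩ B) = μ A * μ B) :
    μ (A ∩ Bᶜ) = μ A * μ Bᶜ := by
  have h1 : μ (A ∩ B) + μ (A ∩ Bᶜ) = μ A := by
    rw [← Set.diff_eq]
    exact measure_inter_add_diff A hB
  have h2 : μ (A ∩ B) + μ A * μ Bᶜ = μ A := by
    rw [h, ← mul_add, measure_add_measure_compl hB, measure_univ, mul_one]
  exact (ENNReal.add_right_inj (measure_ne_top μ _)).1 (h1.trans h2.symm)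

include hu hp hsupp hss in
lemma indep_dig {i j : ℕ} (hij : i ≠ j) : IndepFun (dig u i) (dig u j) μ := by
  have base : μ (Ek u i ∩ Ek u j) = μ (Ek u i) * μ (Ek u j) := by
    rw [muEk hu hp μ hsupp hss, muEk hu hp μ hsupp hss]
    rcases hij.lt_or_gt with h | h
    · exact muEkEk hu hp μ hsupp hss h
    · rw [Set.inter_comm]
      exact muEkEk hu hp μ hsupp hss h
  have base' : μ (Ek u j ∩ Ek u i) = μ (Ek u j) * μ (Ek u i) := by
    rw [Set.inter_comm, base, mul_comm]
  have c1 : μ (Ek u i ∩ (Ek u j)ᶜ) = μ (Ek u i) * μ (Ek u j)ᶜ :=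
    prod_compl (measurableSet_Ek u j) base
  have c2 : μ ((Ek u i)ᶜ ∩ Ek u j) = μ (Ek u i)ᶜ * μ (Ek u j) := by
    rw [Set.inter_comm, prod_compl (measurableSet_Ek u i) base', mul_comm]
  have c3 : μ ((Ek u i)ᶜ ∩ (Ek u j)ᶜ) = μ (Ek u i)ᶜ * μ (Ek u j)ᶜ :=
    prod_compl (measurableSet_Ek u j) c2
  rw [indepFun_iff_measure_inter_preimage_eq_mul]
  intro s t hs ht
  rw [preim_dig, preim_dig]
  split_ifs <;>
    simp [Set.univ_inter, Set.inter_univ, Set.empty_inter, Set.inter_empty,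
      measure_univ, measure_empty, one_mul, mul_one, zero_mul, mul_zero,
      base, c1, c2, c3]

include hu hp hsupp hss in
lemma ident_dig (i : ℕ) : IdentDistrib (dig u i) (dig u 0) μ μ := by
  refine ⟨(measurable_dig u i).aemeasurable, (measurable_dig u 0).aemeasurable, ?_⟩
  refine Measure.ext fun s hs => ?_
  rw [Measure.map_apply (measurable_dig u i) hs, Measure.map_apply (measurable_dig u 0) hs,
    preim_dig, preim_dig]
  split_ifs with h1 h0 h0
  · rfl
  · rw [muEk hu hp μ hsupp hss, muEk hu hp μ hsupp hss]
  · rw [prob_compl_eq_one_sub (measurableSet_Ek u i),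
      prob_compl_eq_one_sub (measurableSet_Ek u 0),
      muEk hu hp μ hsupp hss, muEk hu hp μ hsupp hss]
  · rfl

include hu hp hsupp hss in
lemma key : ∀ᵐ x ∂μ, Tendsto (fun n : ℕ => (∑ i ∈ Finset.range n, dig u i x) / n)
    atTop (𝓝 p) := by
  have hint : Integrable (dig u 0) μ :=
    (integrable_const (1:ℝ)).indicator (measurableSet_Ek u 0)
  have hindep : Pairwise (Function.onFun (IndepFun · · μ) (dig u)) :=
    fun i j hij => indep_dig hu hp μ hsupp hss hij
  have hident : ∀ i, IdentDistrib (dig u i) (dig u 0) μ μ :=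
    fun i => ident_dig hu hp μ hsupp hss i
  have := strong_law_ae_real (dig u) hint hindep hident
  have hmean : μ[dig u 0] = p := by
    rw [show dig u 0 = (Ek u 0).indicator (fun _ => (1:ℝ)) from rfl,
      integral_indicator_const _ (measurableSet_Ek u 0), measureReal_def, muEk hu hp μ hsupp hss,
      ENNReal.toReal_ofReal hp.1.le, smul_eq_mul, mul_one]
  rwa [hmean] at this

end Mu


lemma nu_prob : IsProbabilityMeasure (volume.restrict (Set.Icc (0:ℝ) 1)) := by
  constructor
  rw [Measure.restrict_apply_univ, Real.volume_Icc]
  norm_num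

lemma nu_supp : (volume.restrict (Set.Icc (0:ℝ) 1)) (Set.Icc (0:ℝ) 1)ᶜ = 0 := by
  rw [Measure.restrict_apply (measurableSet_Icc.compl), Set.compl_inter_self, measure_empty]

lemma nu_ss {u : ℝ} (hu : u ∈ Set.Ioo (0:ℝ) 1) :
    volume.restrict (Set.Icc (0:ℝ) 1) =
      ENNReal.ofReal (1 - u) • (volume.restrict (Set.Icc (0:ℝ) 1)).map (fun x => u + (1 - u) * x)
      + ENNReal.ofReal u • (volume.restrict (Set.Icc (0:ℝ) 1)).map (fun x => u * x) := by
  obtain ⟨hu0, hu1⟩ := hu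
  have h1u : (0:ℝ) < 1 - u := by linarith
  have m0 : Measurable (fun x : ℝ => u + (1 - u) * x) :=
    (measurable_id.const_mul (1-u)).const_add u
  have m1 : Measurable (fun x : ℝ => u * x) := measurable_id.const_mul u
  refine Measure.ext fun A hA => ?_
  rw [Measure.add_apply, Measure.smul_apply, Measure.smul_apply, smul_eq_mul, smul_eq_mul,
    Measure.map_apply m0 hA, Measure.map_apply m1 hA,
    Measure.restrict_apply hA, Measure.restrict_apply (m0 hA), Measure.restrict_apply (m1 hA)]
  have hpre1 : (fun x : ℝ => u * x) ⁻¹' A ∩ Set.Icc 0 1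
      = (fun x : ℝ => u * x) ⁻¹' (A ∩ Set.Icc 0 u) := by
    rw [Set.preimage_inter]
    congr 1
    ext x
    simp only [mem_preimage, mem_Icc]
    constructor
    · rintro ⟨h0, h1⟩
      exact ⟨by positivity, by nlinarith⟩
    · rintro ⟨h0, h1⟩
      constructor
      · by_contra h
        push_neg at h
        nlinarith
      · by_contra h
        push_neg at h
        nlinarith
  have hpre0 : (fun x : ℝ => u + (1 - u) * x) ⁻¹' A ∩ Set.Icc 0 1
      = (fun x : ℝ => u + (1 - u) * x) ⁻¹' (A ∩ Set.Icc u 1) := by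
    rw [Set.preimage_inter]
    congr 1
    ext x
    simp only [mem_preimage, mem_Icc]
    constructor
    · rintro ⟨h0, h1⟩
      exact ⟨by nlinarith, by nlinarith⟩
    · rintro ⟨h0, h1⟩
      exact ⟨by nlinarith, by nlinarith⟩
  have hvol1 : ENNReal.ofReal u * volume ((fun x : ℝ => u * x) ⁻¹' (A ∩ Set.Icc 0 u))
      = volume (A ∩ Set.Icc 0 u) := by
    rw [Real.volume_preimage_mul_left (ne_of_gt hu0), abs_of_pos (inv_pos.2 hu0),
      ← mul_assoc, ← ENNReal.ofReal_mul hu0.le, mul_inv_cancel₀ (ne_of_gt hu0),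
      ENNReal.ofReal_one, one_mul]
  have hvol0 : ENNReal.ofReal (1 - u) *
        volume ((fun x : ℝ => u + (1 - u) * x) ⁻¹' (A ∩ Set.Icc u 1))
      = volume (A ∩ Set.Icc u 1) := by
    have hc : (fun x : ℝ => u + (1 - u) * x) = (fun y : ℝ => u + y) ∘ (fun x => (1 - u) * x) := by
      funext x; rfl
    rw [hc, Set.preimage_comp, Real.volume_preimage_mul_left (ne_of_gt h1u),
      measure_preimage_add volume u _, abs_of_pos (inv_pos.2 h1u),
      ← mul_assoc, ← ENNReal.ofReal_mul h1u.le, mul_inv_cancel₀ (ne_of_gt h1u),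
      ENNReal.ofReal_one, one_mul]
  rw [hpre0, hpre1, hvol0, hvol1]
  have hsum : volume (A ∩ Set.Icc u 1) + volume (A ∩ Set.Icc 0 u) = volume (A ∩ Set.Icc 0 1) := by
    have hunion : (A ∩ Set.Icc 0 u) ∪ (A ∩ Set.Icc u 1) = A ∩ Set.Icc 0 1 := by
      rw [← Set.inter_union_distrib_left, Set.Icc_union_Icc_eq_Icc hu0.le hu1.le]
    have := measure_union_add_inter (μ := volume) (A ∩ Set.Icc 0 u)
      (hA.inter measurableSet_Icc) (t := A ∩ Set.Icc u 1)
    rw [hunion] at this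
    have hsing : volume ((A ∩ Set.Icc 0 u) ∩ (A ∩ Set.Icc u 1)) = 0 := by
      refine measure_mono_null ?_ (Real.volume_singleton (a := u))
      intro x hx
      have h1 := hx.1.2.2
      have h2 := hx.2.2.1
      simp only [mem_singleton_iff]
      linarith
    rw [hsing, add_zero] at this
    rw [this, add_comm]
  rw [hsum]

theorem main (u p : ℝ) (hu : u ∈ Set.Ioo (0:ℝ) 1) (hp : p ∈ Set.Ioo (0:ℝ) 1)
    (hne : u ≠ p)
    (μ : Measure ℝ) [IsProbabilityMeasure μ] (hsupp : μ (Set.Icc (0:ℝ) 1)ᶜ = 0)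
    (hss : μ = ENNReal.ofReal (1 - p) • μ.map (fun x => u + (1 - u) * x)
          + ENNReal.ofReal p • μ.map (fun x => u * x)) :
    μ ⟂ₘ volume.restrict (Set.Icc (0:ℝ) 1) := by
  haveI := nu_prob
  have h1 := key hu hp μ hsupp hss
  have h2 := key hu hu (volume.restrict (Set.Icc (0:ℝ) 1)) nu_supp (nu_ss hu)
  set G : Set ℝ := {x | Tendsto (fun n : ℕ => (∑ i ∈ Finset.range n, dig u i x) / n)
    atTop (𝓝 p)} with hG
  have hμG : μ Gᶜ = 0 := by
    rw [hG, Set.compl_setOf]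
    exact ae_iff.1 h1
  have hνG : (volume.restrict (Set.Icc (0:ℝ) 1)) G = 0 := by
    have hsub : G ⊆ {x | ¬ Tendsto (fun n : ℕ => (∑ i ∈ Finset.range n, dig u i x) / n)
        atTop (𝓝 u)} := by
      intro x hx hx'
      exact hne (tendsto_nhds_unique hx' hx)
    refine measure_mono_null hsub ?_
    exact h2
  set s : Set ℝ := toMeasurable (volume.restrict (Set.Icc (0:ℝ) 1)) G with hs
  refine ⟨sᶜ, (measurableSet_toMeasurable _ _).compl, ?_, ?_⟩
  · refine measure_mono_null (Set.compl_subset_compl.2 (subset_toMeasurable _ _)) hμG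
  · rw [compl_compl, hs, measure_toMeasurable]
    exact hνG

end Stmt12Aux

open MeasureTheory Set

/-- for `u ≠ p` the self-similar measure `μ_u` is singular with respect
to Lebesgue measure on `[0,1]`. -/
theorem stmt12 (u p : ℝ) (hu : u ∈ Set.Ioo (0:ℝ) 1) (hp : p ∈ Set.Ioo (0:ℝ) 1)
    (hne : u ≠ p)
    (μ : Measure ℝ) [IsProbabilityMeasure μ] (hsupp : μ (Set.Icc (0:ℝ) 1)ᶜ = 0)
    (hss : μ = ENNReal.ofReal (1 - p) • μ.map (fun x => u + (1 - u) * x)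
          + ENNReal.ofReal p • μ.map (fun x => u * x)) :
    μ ⟂ₘ volume.restrict (Set.Icc (0:ℝ) 1) := by
  exact Stmt12Aux.main u p hu hp hne μ hsupp hss
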